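/- (Symmetrization of Lovász-feasible points) Let G be a simple graph on a finite vertex set V and let Π be a finite subgroup of the automorphism group of G. If (x, M) is Lovász-feasible for G, then the averaged pair (x̄, M̄), defined by x̄ a = (1/|Π|) Σ_{π ∈ Π} x (π⁻¹ a) and M̄ a b = (1/|Π|) Σ_{π ∈ Π} M (π⁻¹ a) (π⁻¹ b), is again Lovász-feasible for G, is Π-invariant (x̄ (π a) = x̄ a and M̄ (π a) (π b) = M̄ a b for all π ∈ Π), and has the same objective value, Σ_{a ∈ V} M̄ a a = Σ_{a ∈ V} M a a. -/

import Mathlib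

open Matrix

/-- The `(1 + |V|) × (1 + |V|)` block matrix with top-left entry `1`, first row `xᵀ`,
first column `x`, and lower-right block `M`. -/
def lovaszBlock {V : Type*} (x : V → ℝ) (M : Matrix V V ℝ) :
    Matrix (Option V) (Option V) ℝ :=
  Matrix.of fun a b =>
    match a, b with
    | none, none => 1
    | none, some j => x j
    | some i, none => x i
    | some i, some j => M i j

/-- A pair `(x, M)` is Lovász-feasible for the adjacency relation `Adj`:
`M a a = x a`, `M a b = 0` on edges, and the block matrix is positive semidefinite. -/
def LovaszFeasible {V : Type*} [Fintype V] (Adj : V → V → Prop)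
    (x : V → ℝ) (M : Matrix V V ℝ) : Prop :=
  (∀ a, M a a = x a) ∧ (∀ a b, Adj a b → M a b = 0) ∧ (lovaszBlock x M).PosSemidef

private lemma psd_add {n : Type*} [Fintype n] {A B : Matrix n n ℝ}
    (hA : A.PosSemidef) (hB : B.PosSemidef) : (A + B).PosSemidef := by
  refine ⟨hA.1.add hB.1, fun v => ?_⟩
  have := add_nonneg (hA.2 v) (hB.2 v)
  simpa [mul_add, add_mul] using this

private lemma psd_sum {n ι : Type*} [Fintype n] (s : Finset ι) (f : ι → Matrix n n ℝ)
    (h : ∀ i ∈ s, (f i).PosSemidef) : (∑ i ∈ s, f i).PosSemidef := by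
  classical
  induction s using Finset.induction_on with
  | empty => simpa using Matrix.PosSemidef.zero
  | insert _ _ hni ih =>
    rw [Finset.sum_insert hni]
    exact psd_add (h _ (Finset.mem_insert_self _ _))
      (ih fun i hi => h i (Finset.mem_insert_of_mem hi))

private lemma psd_smul {n : Type*} [Fintype n] {A : Matrix n n ℝ} (hA : A.PosSemidef)
    {c : ℝ} (hc : 0 ≤ c) : (c • A).PosSemidef := by
  constructor
  · have h := hA.1
    unfold Matrix.IsHermitian at h ⊢
    rw [conjTranspose_smul, h]
    simp
  · intro v
    have := hA.2 v
    convert mul_nonneg hc this using 1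
    simp only [Matrix.smul_apply, smul_eq_mul, Finsupp.mul_sum]
    exact Finsupp.sum_congr fun i _ => Finsupp.sum_congr fun j _ => by ring

/-- Symmetrization of Lovász-feasible points: averaging a feasible pair over a finite
group of automorphisms of `G` yields a feasible, invariant pair with the same
objective value. -/
theorem stmt14 {V : Type*} [Fintype V] [DecidableEq V] (G : SimpleGraph V)
    (H : Subgroup (Equiv.Perm V)) [Fintype H]
    (hH : ∀ π ∈ H, ∀ a b : V, G.Adj (π a) (π b) ↔ G.Adj a b)
    (x : V → ℝ) (M : Matrix V V ℝ) (hfeas : LovaszFeasible G.Adj x M) :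
    LovaszFeasible G.Adj
        (fun a => (1 / (Fintype.card H : ℝ)) * ∑ π : H, x ((π : Equiv.Perm V)⁻¹ a))
        (Matrix.of fun a b => (1 / (Fintype.card H : ℝ)) *
          ∑ π : H, M ((π : Equiv.Perm V)⁻¹ a) ((π : Equiv.Perm V)⁻¹ b))
    ∧ (∀ π ∈ H, ∀ a : V,
        (1 / (Fintype.card H : ℝ)) * ∑ τ : H, x ((τ : Equiv.Perm V)⁻¹ (π a)) =
          (1 / (Fintype.card H : ℝ)) * ∑ τ : H, x ((τ : Equiv.Perm V)⁻¹ a))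
    ∧ (∀ π ∈ H, ∀ a b : V,
        (1 / (Fintype.card H : ℝ)) *
            ∑ τ : H, M ((τ : Equiv.Perm V)⁻¹ (π a)) ((τ : Equiv.Perm V)⁻¹ (π b)) =
          (1 / (Fintype.card H : ℝ)) *
            ∑ τ : H, M ((τ : Equiv.Perm V)⁻¹ a) ((τ : Equiv.Perm V)⁻¹ b))
    ∧ (∑ a : V, (1 / (Fintype.card H : ℝ)) *
          ∑ π : H, M ((π : Equiv.Perm V)⁻¹ a) ((π : Equiv.Perm V)⁻¹ a)) =
        ∑ a : V, M a a := by
  obtain ⟨hdiag, hedge, hpsd⟩ := hfeas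
  have hcard : 0 < (Fintype.card H : ℝ) := by
    exact_mod_cast Fintype.card_pos
  refine ⟨⟨?_, ?_, ?_⟩, ?_, ?_, ?_⟩
  · intro a
    simp only [Matrix.of_apply]
    congr 1
    exact Finset.sum_congr rfl fun π _ => hdiag _
  · intro a b hab
    simp only [Matrix.of_apply]
    have : ∀ π : H, M ((π : Equiv.Perm V)⁻¹ a) ((π : Equiv.Perm V)⁻¹ b) = 0 := by
      intro π
      apply hedge
      rw [← hH (π : Equiv.Perm V) π.2 ((π : Equiv.Perm V)⁻¹ a) ((π : Equiv.Perm V)⁻¹ b)]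
      simpa using hab
    rw [Finset.sum_eq_zero (fun π _ => this π), mul_zero]
  · -- PSD of averaged block
    have key : (lovaszBlock
        (fun a => (1 / (Fintype.card H : ℝ)) * ∑ π : H, x ((π : Equiv.Perm V)⁻¹ a))
        (Matrix.of fun a b => (1 / (Fintype.card H : ℝ)) *
          ∑ π : H, M ((π : Equiv.Perm V)⁻¹ a) ((π : Equiv.Perm V)⁻¹ b)))
        = (1 / (Fintype.card H : ℝ)) •
          ∑ π : H, (lovaszBlock x M).submatrix
            (Option.map fun a => (π : Equiv.Perm V)⁻¹ a)
            (Option.map fun a => (π : Equiv.Perm V)⁻¹ a) := by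
      ext a b
      match a, b with
      | none, none =>
        simp [lovaszBlock, Matrix.sum_apply, Matrix.smul_apply, Finset.card_univ,
          one_div, inv_mul_cancel₀ (ne_of_gt hcard)]
      | none, some j =>
        simp [lovaszBlock, Matrix.sum_apply, Matrix.smul_apply]
      | some i, none =>
        simp [lovaszBlock, Matrix.sum_apply, Matrix.smul_apply]
      | some i, some j =>
        simp [lovaszBlock, Matrix.sum_apply, Matrix.smul_apply]
    rw [key]
    refine psd_smul (psd_sum _ _ fun π _ => hpsd.submatrix _) (by positivity)
  · -- invariance of x̄
    intro π hπ a
    congr 1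
    refine Fintype.sum_equiv (Equiv.mulLeft ((⟨π, hπ⟩ : H)⁻¹))
      (fun τ : H => x ((τ : Equiv.Perm V)⁻¹ (π a)))
      (fun τ : H => x ((τ : Equiv.Perm V)⁻¹ a)) (fun τ => ?_)
    show _ = x (((((⟨π, hπ⟩ : H)⁻¹ * τ) : H) : Equiv.Perm V)⁻¹ a)
    rw [Subgroup.coe_mul, _root_.mul_inv_rev]
    simp [Equiv.Perm.mul_apply]
  · -- invariance of M̄
    intro π hπ a b
    congr 1
    refine Fintype.sum_equiv (Equiv.mulLeft ((⟨π, hπ⟩ : H)⁻¹))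
      (fun τ : H => M ((τ : Equiv.Perm V)⁻¹ (π a)) ((τ : Equiv.Perm V)⁻¹ (π b)))
      (fun τ : H => M ((τ : Equiv.Perm V)⁻¹ a) ((τ : Equiv.Perm V)⁻¹ b))
      (fun τ => ?_)
    show _ = M (((((⟨π, hπ⟩ : H)⁻¹ * τ) : H) : Equiv.Perm V)⁻¹ a)
      (((((⟨π, hπ⟩ : H)⁻¹ * τ) : H) : Equiv.Perm V)⁻¹ b)
    rw [Subgroup.coe_mul, _root_.mul_inv_rev]
    simp [Equiv.Perm.mul_apply]
  · -- objective value
    have h2 : ∀ π : H, ∑ a : V, M ((π : Equiv.Perm V)⁻¹ a) ((π : Equiv.Perm V)⁻¹ a)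
        = ∑ a : V, M a a := fun π =>
      Fintype.sum_equiv ((π : Equiv.Perm V)⁻¹ : Equiv.Perm V)
        (fun a => M ((π : Equiv.Perm V)⁻¹ a) ((π : Equiv.Perm V)⁻¹ a))
        (fun a => M a a) (fun a => rfl)
    rw [← Finset.mul_sum, Finset.sum_comm,
      Finset.sum_congr rfl (fun π _ => h2 π), Finset.sum_const, Finset.card_univ,
      nsmul_eq_mul]
    field_simp
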